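/- (Precision monotonicity of the three-valued valuation) For every pair of biworlds w, w' with w ≤_p w' and every formula φ of the language COEL, the three-valued value satisfies φ^w ≤_p φ^{w'}, where on truth values u ≤_p f and u ≤_p t. -/

import Mathlib

open Ordinal

/-- Three truth values: true, false, unknown. -/
inductive TV : Type
  | t | f | u
deriving DecidableEq

namespace TV

/-- Inverse of a truth value. -/
def inv : TV → TV
  | t => f
  | f => t
  | u => u

/-- Binary greatest lower bound in the truth order f ≤ₜ u ≤ₜ t. -/
def tmin : TV → TV → TV
  | f, _ => f
  | _, f => f
  | u, _ => u
  | _, u => u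
  | t, t => t

/-- Truth value of a proposition. -/
noncomputable def ofProp (p : Prop) : TV := by
  classical
  exact if p then t else f

/-- Greatest lower bound of a set of truth values in the truth order f ≤ₜ u ≤ₜ t. -/
noncomputable def tglbSet (s : Set TV) : TV := by
  classical
  exact if f ∈ s then f else if u ∈ s then u else t

/-- Least upper bound of a (chain) set of truth values in the precision order
u ≤ₚ t, u ≤ₚ f. -/
noncomputable def plubSet (s : Set TV) : TV := by
  classical
  exact if t ∈ s then t else if f ∈ s then f else u

/-- Precision order on truth values: u below everything. -/
def ple (a b : TV) : Prop := a = u ∨ a = b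

end TV

/-- Formulas of the language COEL. -/
inductive Form (Agent Atom : Type) : Type
  | atom : Atom → Form Agent Atom
  | neg : Form Agent Atom → Form Agent Atom
  | and : Form Agent Atom → Form Agent Atom → Form Agent Atom
  | K : Agent → Form Agent Atom → Form Agent Atom
  | M : Agent → Form Agent Atom → Form Agent Atom
  | E : Set Agent → Form Agent Atom → Form Agent Atom
  | C : Set Agent → Form Agent Atom → Form Agent Atom

/-- Iterated `E_G` operator: `Eiter G 0 φ = φ`, `Eiter G (k+1) φ = E_G (Eiter G k φ)`. -/
def Form.Eiter {Agent Atom : Type} (G : Set Agent) : ℕ → Form Agent Atom → Form Agent Atom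
  | 0, φ => φ
  | k + 1, φ => .E G (Form.Eiter G k φ)

/-- Modal depth of a COEL formula. -/
noncomputable def Form.MD {Agent Atom : Type} : Form Agent Atom → Ordinal.{0}
  | .atom _ => 0
  | .neg φ => φ.MD
  | .and φ ψ => max φ.MD ψ.MD
  | .K _ φ => φ.MD + 1
  | .M _ φ => φ.MD + 1
  | .E _ φ => φ.MD + 1
  | .C _ φ => φ.MD + omega0

/-- A system of prebiworlds over agents `Agent` and propositional vocabulary `Atom`,
packaging the transfinite construction of μ-prebiworlds for all countable ordinals μ,
together with the recursive equations defining restriction. -/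
structure PrebSys (Agent Atom : Type) where
  /-- the collection of all prebiworlds (of all depths) -/
  W : Type 1
  /-- the depth of a prebiworld -/
  depth : W → Ordinal.{0}
  depth_countable : ∀ w, (depth w).card ≤ Cardinal.aleph0
  /-- the objective interpretation of a prebiworld -/
  obj : W → Set Atom
  /-- for a (μ+1)-prebiworld, the set A^w of μ-prebiworlds deemed (extendibly) possible -/
  poss : Agent → W → Set W
  /-- for a (μ+1)-prebiworld, the set Ā^w of μ-prebiworlds deemed (extendibly) impossible -/
  imposs : Agent → W → Set W
  /-- for a limit-depth prebiworld, its component (w)_α at α < depth w -/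
  comp : W → Ordinal.{0} → W
  /-- the restriction w|_α of w to depth α ≤ depth w -/
  restrict : W → Ordinal.{0} → W
  depth_poss : ∀ (A : Agent) (w v : W), v ∈ poss A w → depth w = depth v + 1
  depth_imposs : ∀ (A : Agent) (w v : W), v ∈ imposs A w → depth w = depth v + 1
  depth_comp : ∀ (w : W) (α : Ordinal.{0}), Order.IsSuccLimit (depth w) → α < depth w →
    depth (comp w α) = α
  comp_mono : ∀ (w : W) (α β : Ordinal.{0}), Order.IsSuccLimit (depth w) → α ≤ β → β < depth w →
    restrict (comp w β) α = comp w α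
  ext_zero : ∀ w w' : W, depth w = 0 → depth w' = 0 → obj w = obj w' → w = w'
  ext_succ : ∀ (w w' : W) (μ : Ordinal.{0}), depth w = μ + 1 → depth w' = μ + 1 →
    obj w = obj w' → (∀ A, poss A w = poss A w') → (∀ A, imposs A w = imposs A w') → w = w'
  ext_limit : ∀ w w' : W, Order.IsSuccLimit (depth w) → depth w' = depth w →
    (∀ α < depth w, comp w α = comp w' α) → w = w'
  depth_restrict : ∀ (w : W) (α : Ordinal.{0}), α ≤ depth w → depth (restrict w α) = α
  restrict_zero : ∀ w : W, obj (restrict w 0) = obj w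
  restrict_limit : ∀ (w : W) (α β : Ordinal.{0}), Order.IsSuccLimit α → α ≤ depth w → β < α →
    comp (restrict w α) β = restrict w β
  restrict_succ_limit : ∀ (w : W) (α : Ordinal.{0}), Order.IsSuccLimit (depth w) →
    α + 1 ≤ depth w → restrict w (α + 1) = comp w (α + 1)
  restrict_succ_obj : ∀ (w : W) (μ α : Ordinal.{0}), depth w = μ + 1 → α + 1 ≤ depth w →
    obj (restrict w (α + 1)) = obj w
  restrict_succ_poss : ∀ (w : W) (μ α : Ordinal.{0}) (A : Agent), depth w = μ + 1 →
    α + 1 ≤ depth w →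
    poss A (restrict w (α + 1)) = (fun v => restrict v α) '' poss A w
  restrict_succ_imposs : ∀ (w : W) (μ α : Ordinal.{0}) (A : Agent), depth w = μ + 1 →
    α + 1 ≤ depth w →
    imposs A (restrict w (α + 1)) = (fun v => restrict v α) '' imposs A w

/-- The precision order: v ≤ₚ w iff w restricted to the depth of v equals v. -/
def PrebSys.lep {Agent Atom : Type} (S : PrebSys Agent Atom) (v w : S.W) : Prop :=
  S.depth v ≤ S.depth w ∧ S.restrict w (S.depth v) = v

/-- A system of biworlds: prebiworlds together with the simultaneously
(transfinite-recursively) defined predicates `Biworld` and `Incompleted`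
and their defining clauses. -/
structure BiSys (Agent Atom : Type) extends PrebSys Agent Atom where
  Biworld : W → Prop
  Incompleted : W → Prop
  biworld_zero : ∀ w : W, depth w = 0 → Biworld w
  biworld_succ : ∀ (w : W) (μ : Ordinal.{0}), depth w = μ + 1 →
    (Biworld w ↔ ∀ A : Agent,
      poss A w ∪ imposs A w = {v | depth v = μ ∧ Biworld v} ∧
      ∀ v ∈ poss A w ∩ imposs A w, Incompleted v)
  biworld_limit : ∀ w : W, Order.IsSuccLimit (depth w) →
    (Biworld w ↔ ∀ α < depth w, Biworld (comp w α))
  incompleted_iff : ∀ w : W, Incompleted w ↔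
    ∃ v₁ v₂ : W, v₁ ≠ v₂ ∧ Biworld v₁ ∧ Biworld v₂ ∧
      depth v₁ = depth w + 1 ∧ depth v₂ = depth w + 1 ∧
      PrebSys.lep toPrebSys w v₁ ∧ PrebSys.lep toPrebSys w v₂

/-- A biworld is completed if it is not incompleted. -/
def BiSys.Completed {Agent Atom : Type} (S : BiSys Agent Atom) (w : S.W) : Prop :=
  ¬ S.Incompleted w

/-- For a limit-depth prebiworld w, the set A↑w. -/
def BiSys.upPoss {Agent Atom : Type} (S : BiSys Agent Atom) (A : Agent) (w : S.W) :
    Set S.W :=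
  {v | S.depth v = S.depth w ∧ ∀ α < S.depth w, S.comp v α ∈ S.poss A (S.comp w (α + 1))}

/-- For a limit-depth prebiworld w, the set Ā↑w. -/
def BiSys.upImposs {Agent Atom : Type} (S : BiSys Agent Atom) (A : Agent) (w : S.W) :
    Set S.W :=
  {v | S.depth v = S.depth w ∧ ∀ α < S.depth w, S.comp v α ∈ S.imposs A (S.comp w (α + 1))}

/-- A system of biworlds together with the three-valued valuation of COEL formulas
and its defining equations. -/
structure ValSys (Agent Atom : Type) extends BiSys Agent Atom where
  val : Form Agent Atom → W → TV
  val_atom : ∀ (P : Atom) (w : W), val (.atom P) w = TV.ofProp (P ∈ obj w)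
  val_neg : ∀ (φ : Form Agent Atom) (w : W), val (.neg φ) w = (val φ w).inv
  val_and : ∀ (φ ψ : Form Agent Atom) (w : W),
    val (.and φ ψ) w = (val φ w).tmin (val ψ w)
  val_K_zero : ∀ (A : Agent) (φ : Form Agent Atom) (w : W), depth w = 0 →
    val (.K A φ) w = TV.u
  val_K_succ : ∀ (A : Agent) (φ : Form Agent Atom) (w : W) (μ : Ordinal.{0}),
    depth w = μ + 1 → val (.K A φ) w = TV.tglbSet (val φ '' poss A w)
  val_K_limit : ∀ (A : Agent) (φ : Form Agent Atom) (w : W), Order.IsSuccLimit (depth w) →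
    val (.K A φ) w = TV.plubSet {x | ∃ α < depth w, x = val (.K A φ) (comp w α)}
  val_M_zero : ∀ (A : Agent) (φ : Form Agent Atom) (w : W), depth w = 0 →
    val (.M A φ) w = TV.u
  val_M_succ : ∀ (A : Agent) (φ : Form Agent Atom) (w : W) (μ : Ordinal.{0}),
    depth w = μ + 1 →
    val (.M A φ) w = TV.tglbSet ((fun v => (val φ v).inv) '' imposs A w)
  val_M_limit : ∀ (A : Agent) (φ : Form Agent Atom) (w : W), Order.IsSuccLimit (depth w) →
    val (.M A φ) w = TV.plubSet {x | ∃ α < depth w, x = val (.M A φ) (comp w α)}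
  val_E : ∀ (G : Set Agent) (φ : Form Agent Atom) (w : W),
    val (.E G φ) w = TV.tglbSet {x | ∃ A ∈ G, x = val (.K A φ) w}
  val_C : ∀ (G : Set Agent) (φ : Form Agent Atom) (w : W),
    val (.C G φ) w = TV.tglbSet {x | ∃ k : ℕ, 1 ≤ k ∧ x = val (Form.Eiter G k φ) w}

/-- A world: a completed (ω²+1)-biworld. -/
def ValSys.World {Agent Atom : Type} (S : ValSys Agent Atom) (w : S.W) : Prop :=
  S.Biworld w ∧ S.depth w = omega0 ^ 2 + 1 ∧ S.toBiSys.Completed w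

/-- Accessibility in the canonical Kripke structure K*: w R_A w' iff w'|_{ω²} ∈ A^w. -/
def ValSys.Racc {Agent Atom : Type} (S : ValSys Agent Atom) (A : Agent)
    (w w' : S.W) : Prop :=
  S.restrict w' (omega0 ^ 2) ∈ S.poss A w

/-- Two-valued Kripke valuation on the canonical Kripke structure K* of worlds. -/
def ValSys.kval {Agent Atom : Type} (S : ValSys Agent Atom) :
    Form Agent Atom → S.W → Prop
  | .atom P, w => P ∈ S.obj w
  | .neg φ, w => ¬ S.kval φ w
  | .and φ ψ, w => S.kval φ w ∧ S.kval ψ w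
  | .K A φ, w => ∀ w', S.World w' → S.Racc A w w' → S.kval φ w'
  | .M A φ, w => ∀ w', S.World w' → S.kval φ w' → S.Racc A w w'
  | .E G φ, w => ∀ A ∈ G, ∀ w', S.World w' → S.Racc A w w' → S.kval φ w'
  | .C G φ, w => ∀ w', Relation.TransGen (fun x y => S.World y ∧ ∃ A ∈ G, S.Racc A x y) w w' →
      S.kval φ w'

/-! ### Auxiliary lemmas -/

namespace TV

theorem ple_refl (a : TV) : ple a a := Or.inr rfl

theorem ple_u' (a : TV) : ple u a := Or.inl rfl

theorem ple_inv' {a b : TV} (h : ple a b) : ple a.inv b.inv := by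
  cases a <;> cases b <;> simp_all [ple, inv]

theorem ple_tmin' {a b c d : TV} (h1 : ple a b) (h2 : ple c d) :
    ple (tmin a c) (tmin b d) := by
  cases a <;> cases b <;> cases c <;> cases d <;> simp_all [ple, tmin]

theorem tglb_mono {s₁ s₂ : Set TV}
    (h₁ : ∀ x ∈ s₁, ∃ y ∈ s₂, ple x y)
    (h₂ : ∀ y ∈ s₂, ∃ x ∈ s₁, ple x y) :
    ple (tglbSet s₁) (tglbSet s₂) := by
  classical
  by_cases hf : f ∈ s₁
  · obtain ⟨y, hy, hpy⟩ := h₁ f hf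
    have hyf : y = f := by
      rcases hpy with h | h
      · exact absurd h (by decide)
      · exact h.symm
    subst hyf
    simp only [tglbSet, if_pos hf, if_pos hy]
    exact ple_refl _
  · by_cases hu : u ∈ s₁
    · simp only [tglbSet, if_neg hf, if_pos hu]
      exact ple_u' _
    · have hf2 : f ∉ s₂ := by
        intro h
        obtain ⟨x, hx, hpx⟩ := h₂ f h
        rcases hpx with h' | h'
        · exact hu (h' ▸ hx)
        · exact hf (h' ▸ hx)
      have hu2 : u ∉ s₂ := by
        intro h
        obtain ⟨x, hx, hpx⟩ := h₂ u h
        rcases hpx with h' | h'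
        · exact hu (h' ▸ hx)
        · exact hu (h' ▸ hx)
      simp only [tglbSet, if_neg hf, if_neg hu, if_neg hf2, if_neg hu2]
      exact ple_refl _

end TV

/-- Case analysis for ordinals with `+1` instead of `succ`. -/
theorem ord_cases (o : Ordinal.{0}) : o = 0 ∨ (∃ a, o = a + 1) ∨ Order.IsSuccLimit o := by
  rcases Ordinal.zero_or_succ_or_isSuccLimit o with h | ⟨a, h⟩ | h
  · exact Or.inl h
  · exact Or.inr (Or.inl ⟨a, by rw [← h, Ordinal.add_one_eq_succ]⟩)
  · exact Or.inr (Or.inr h)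

theorem ord_add_one_inj {a b : Ordinal.{0}} (h : a + 1 = b + 1) : a = b := by
  rwa [Ordinal.add_one_eq_succ, Ordinal.add_one_eq_succ, Order.succ_eq_succ_iff] at h

theorem ord_lt_add_one (a : Ordinal.{0}) : a < a + 1 := by
  rw [Ordinal.add_one_eq_succ]; exact Order.lt_succ a

theorem ord_add_one_le_of_lt {a b : Ordinal.{0}} (h : a < b) (hb : Order.IsSuccLimit b) : a + 1 < b := by
  rw [Ordinal.add_one_eq_succ]; exact hb.succ_lt h

theorem ord_add_one_le_add_one {a b : Ordinal.{0}} (h : a + 1 ≤ b + 1) : a ≤ b := by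
  rwa [Ordinal.add_one_eq_succ, Ordinal.add_one_eq_succ, Order.succ_le_succ_iff] at h

namespace PrebSys

variable {Agent Atom : Type} (S : PrebSys Agent Atom)

theorem restrict_restrict_zero (w : S.W) (hl : Order.IsSuccLimit (S.depth w)) (β : Ordinal.{0})
    (hβ : β < S.depth w) : S.restrict (S.restrict w β) 0 = S.restrict w 0 := by
  have hdv : S.depth (S.restrict w (S.depth w)) = S.depth w := S.depth_restrict _ _ le_rfl
  have h1 : S.comp (S.restrict w (S.depth w)) β = S.restrict w β :=
    S.restrict_limit w (S.depth w) β hl le_rfl hβ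
  have h0 : S.comp (S.restrict w (S.depth w)) 0 = S.restrict w 0 :=
    S.restrict_limit w (S.depth w) 0 hl le_rfl hl.pos
  have h2 := S.comp_mono (S.restrict w (S.depth w)) 0 β (by rw [hdv]; exact hl)
    (zero_le (a := β)) (by rw [hdv]; exact hβ)
  rw [h1, h0] at h2
  exact h2

theorem restrict_eq_comp (w : S.W) (hl : Order.IsSuccLimit (S.depth w)) :
    ∀ α < S.depth w, S.restrict w α = S.comp w α := by
  intro α
  induction α using Ordinal.induction with
  | h α ih =>
  intro hα
  rcases ord_cases α with h0 | ⟨γ, hγ⟩ | hαl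
  · subst h0
    have h1 : (0 : Ordinal.{0}) + 1 < S.depth w := ord_add_one_le_of_lt hl.pos hl
    have e1 : S.restrict w (0 + 1) = S.comp w (0 + 1) :=
      S.restrict_succ_limit w 0 hl (le_of_lt h1)
    have e2 : S.restrict (S.comp w (0 + 1)) 0 = S.comp w 0 :=
      S.comp_mono w 0 (0 + 1) hl zero_le h1
    have e3 := S.restrict_restrict_zero w hl (0 + 1) h1
    rw [e1, e2] at e3
    exact e3.symm
  · subst hγ
    exact S.restrict_succ_limit w γ hl (le_of_lt hα)
  · have hαle : α ≤ S.depth w := le_of_lt hα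
    have hd1 : S.depth (S.restrict w α) = α := S.depth_restrict w α hαle
    have hd2 : S.depth (S.comp w α) = α := S.depth_comp w α hl hα
    have hc2 : S.restrict (S.comp w α) α = S.comp w α := S.comp_mono w α α hl le_rfl hα
    apply S.ext_limit (S.restrict w α) (S.comp w α) (by rw [hd1]; exact hαl)
      (by rw [hd2, hd1])
    intro β hβ
    rw [hd1] at hβ
    have hβw : β < S.depth w := lt_trans hβ hα
    have c1 : S.comp (S.restrict w α) β = S.restrict w β :=
      S.restrict_limit w α β hαl hαle hβ
    have c2 : S.comp (S.comp w α) β = S.restrict (S.comp w α) β := by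
      have := S.restrict_limit (S.comp w α) α β hαl (by rw [hd2]) hβ
      rwa [hc2] at this
    have c3 : S.restrict (S.comp w α) β = S.comp w β :=
      S.comp_mono w β α hl (le_of_lt hβ) hα
    rw [c1, c2, c3, ih β hβ hβw]

theorem restrict_self : ∀ (δ : Ordinal.{0}) (w : S.W), S.depth w = δ → S.restrict w δ = w := by
  intro δ
  induction δ using Ordinal.induction with
  | h δ ih =>
  intro w hw
  rcases ord_cases δ with h0 | ⟨μ, hμ⟩ | hδl
  · subst h0
    exact S.ext_zero _ w (S.depth_restrict w 0 (by rw [hw])) hw (S.restrict_zero w)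
  · subst hμ
    have hle : μ + 1 ≤ S.depth w := le_of_eq hw.symm
    have hid : ∀ (T : Agent → S.W → Set S.W)
        (hT : ∀ (A : Agent) (w v : S.W), v ∈ T A w → S.depth w = S.depth v + 1),
        ∀ A, (fun v => S.restrict v μ) '' T A w = T A w := by
      intro T hT A
      have hdv : ∀ v ∈ T A w, S.restrict v μ = v := by
        intro v hv
        have h1 := hT A w v hv
        rw [hw] at h1
        have h2 : S.depth v = μ := ord_add_one_inj h1.symm
        exact ih μ (ord_lt_add_one μ) v h2
      ext x
      constructor
      · rintro ⟨v, hv, rfl⟩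
        show S.restrict v μ ∈ T A w
        rw [hdv v hv]; exact hv
      · intro hx
        exact ⟨x, hx, hdv x hx⟩
    apply S.ext_succ _ w μ (S.depth_restrict w _ hle) hw (S.restrict_succ_obj w μ μ hw hle)
    · intro A
      rw [S.restrict_succ_poss w μ μ A hw hle]
      exact hid S.poss S.depth_poss A
    · intro A
      rw [S.restrict_succ_imposs w μ μ A hw hle]
      exact hid S.imposs S.depth_imposs A
  · have hle : δ ≤ S.depth w := le_of_eq hw.symm
    apply S.ext_limit _ w (by rw [S.depth_restrict w δ hle]; exact hδl)
      (by rw [S.depth_restrict w δ hle, hw])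
    intro β hβ
    rw [S.depth_restrict w δ hle] at hβ
    rw [S.restrict_limit w δ β hδl hle hβ]
    exact S.restrict_eq_comp w (by rw [hw]; exact hδl) β (by rw [hw]; exact hβ)

theorem obj_restrict (w : S.W) (α : Ordinal.{0}) (hα : α ≤ S.depth w) :
    S.obj (S.restrict w α) = S.obj w := by
  rcases eq_or_lt_of_le hα with heq | hlt
  · rw [heq, S.restrict_self (S.depth w) w rfl]
  rcases ord_cases α with h0 | ⟨γ, hγ⟩ | hαl
  · subst h0; exact S.restrict_zero w
  · subst hγ
    rcases ord_cases (S.depth w) with hd0 | ⟨μ, hμ⟩ | hdl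
    · rw [hd0] at hlt; exact absurd hlt not_lt_zero
    · exact S.restrict_succ_obj w μ γ hμ hα
    · have e1 : S.restrict w (γ + 1) = S.comp w (γ + 1) := S.restrict_succ_limit w γ hdl hα
      have e2 : S.restrict (S.comp w (γ + 1)) 0 = S.comp w 0 :=
        S.comp_mono w 0 (γ + 1) hdl zero_le hlt
      have e3 : S.restrict w 0 = S.comp w 0 := S.restrict_eq_comp w hdl 0 hdl.pos
      have o1 : S.obj (S.restrict (S.comp w (γ + 1)) 0) = S.obj (S.comp w (γ + 1)) :=
        S.restrict_zero _
      rw [e2, ← e3, S.restrict_zero w] at o1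
      rw [e1, ← o1]
  · have hd1 : S.depth (S.restrict w α) = α := S.depth_restrict w α hα
    have c1 : S.restrict (S.restrict w α) 0 = S.comp (S.restrict w α) 0 :=
      S.restrict_eq_comp (S.restrict w α) (by rw [hd1]; exact hαl) 0 (by rw [hd1]; exact hαl.pos)
    have c2 : S.comp (S.restrict w α) 0 = S.restrict w 0 := S.restrict_limit w α 0 hαl hα hαl.pos
    have o1 := S.restrict_zero (S.restrict w α)
    rw [c1, c2, S.restrict_zero w] at o1
    exact o1.symm

end PrebSys

namespace ValSys

variable {Agent Atom : Type} (S : ValSys Agent Atom)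

theorem kmono (A : Agent) (φ : Form Agent Atom)
    (hφ : ∀ v v', S.Biworld v → S.Biworld v' → S.toPrebSys.lep v v' →
      TV.ple (S.val φ v) (S.val φ v')) :
    ∀ (μ δ : Ordinal.{0}) (w w' : S.W), S.depth w = μ → S.depth w' = δ →
      S.Biworld w → S.Biworld w' → S.toPrebSys.lep w w' →
      TV.ple (S.val (.K A φ) w) (S.val (.K A φ) w') := by
  intro μ
  induction μ using Ordinal.induction with
  | h μ ihμ =>
  intro δ
  induction δ using Ordinal.induction with
  | h δ ihδ =>
  intro w w' hw hw' hb hb' hle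
  by_cases heqd : S.depth w = S.depth w'
  · have hww : w = w' := by
      rw [← hle.2, heqd, S.toPrebSys.restrict_self _ w' rfl]
    rw [hww]; exact TV.ple_refl _
  have hlt : S.depth w < S.depth w' := lt_of_le_of_ne hle.1 heqd
  rcases ord_cases μ with h0 | ⟨μ₀, hμ₀⟩ | hμl
  · rw [S.val_K_zero A φ w (hw.trans h0)]
    exact TV.ple_u' _
  · -- depth w = μ₀ + 1
    have hwd : S.depth w = μ₀ + 1 := hw.trans hμ₀
    rcases ord_cases δ with h0' | ⟨ν₀, hν₀⟩ | hδl
    · rw [hw', h0'] at hlt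
      exact absurd hlt not_lt_zero
    · -- successor / successor
      have hw'd : S.depth w' = ν₀ + 1 := hw'.trans hν₀
      have hsucc_le : μ₀ + 1 ≤ S.depth w' := by rw [← hwd]; exact hle.1
      have hμν : μ₀ ≤ ν₀ := ord_add_one_le_add_one (by rw [← hw'd]; exact hsucc_le)
      have hposs : S.poss A w = (fun v => S.restrict v μ₀) '' S.poss A w' := by
        conv_lhs => rw [← hle.2, hwd]
        exact S.restrict_succ_poss w' ν₀ μ₀ A hw'd hsucc_le
      have memB : ∀ v ∈ S.poss A w, S.Biworld v := by
        intro v hv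
        have h1 := ((S.biworld_succ w μ₀ hwd).mp hb A).1
        have h2 : v ∈ S.poss A w ∪ S.imposs A w := Or.inl hv
        rw [h1] at h2
        exact h2.2
      have memB' : ∀ v ∈ S.poss A w', S.Biworld v ∧ S.depth v = ν₀ := by
        intro v hv
        have h1 := ((S.biworld_succ w' ν₀ hw'd).mp hb' A).1
        have h2 : v ∈ S.poss A w' ∪ S.imposs A w' := Or.inl hv
        rw [h1] at h2
        exact ⟨h2.2, h2.1⟩
      have key : ∀ v' ∈ S.poss A w', TV.ple (S.val φ (S.restrict v' μ₀)) (S.val φ v') := by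
        intro v' hv'
        have hdv' : S.depth v' = ν₀ := (memB' v' hv').2
        have hμ₀v' : μ₀ ≤ S.depth v' := by rw [hdv']; exact hμν
        refine hφ _ _ ?_ (memB' v' hv').1 ?_
        · apply memB
          rw [hposs]
          exact ⟨v', hv', rfl⟩
        · exact ⟨by rw [S.depth_restrict v' μ₀ hμ₀v']; exact hμ₀v',
            by rw [S.depth_restrict v' μ₀ hμ₀v']⟩
      rw [S.val_K_succ A φ w μ₀ hwd, S.val_K_succ A φ w' ν₀ hw'd]
      apply TV.tglb_mono
      · rintro x ⟨v, hv, rfl⟩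
        rw [hposs] at hv
        obtain ⟨v', hv', rfl⟩ := hv
        exact ⟨S.val φ v', ⟨v', hv', rfl⟩, key v' hv'⟩
      · rintro y ⟨v', hv', rfl⟩
        refine ⟨S.val φ (S.restrict v' μ₀), ⟨S.restrict v' μ₀, ?_, rfl⟩, key v' hv'⟩
        rw [hposs]
        exact ⟨v', hv', rfl⟩
    · -- δ limit
      have hδl' : Order.IsSuccLimit (S.depth w') := by rw [hw']; exact hδl
      have hμ1δ : μ₀ + 1 < S.depth w' := by rw [← hwd]; exact hlt
      have hwc : w = S.comp w' (μ₀ + 1) := by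
        conv_lhs => rw [← hle.2, hwd]
        exact S.restrict_succ_limit w' μ₀ hδl' (le_of_lt hμ1δ)
      rw [S.val_K_limit A φ w' hδl']
      have hmem : S.val (.K A φ) w ∈
          {x | ∃ α < S.depth w', x = S.val (.K A φ) (S.comp w' α)} :=
        ⟨μ₀ + 1, hμ1δ, by rw [← hwc]⟩
      have hval_at : ∀ β < S.depth w', S.val (.K A φ) (S.comp w' β) = TV.t →
          TV.ple (S.val (.K A φ) w) TV.t := by
        intro β hβ ht
        have hdcb : S.depth (S.comp w' β) = β := S.depth_comp w' β hδl' hβ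
        have hbc : S.Biworld (S.comp w' β) := ((S.biworld_limit w' hδl').mp hb') β hβ
        rcases le_or_gt (μ₀ + 1) β with hc | hc
        · have hβδ : β < δ := by rw [← hw']; exact hβ
          have hlep : S.toPrebSys.lep w (S.comp w' β) := by
            refine ⟨by rw [hwd, hdcb]; exact hc, ?_⟩
            rw [hwd]
            have := S.comp_mono w' (μ₀ + 1) β hδl' hc hβ
            rw [this, ← hwc]
          have := ihδ β hβδ w (S.comp w' β) hw hdcb hb hbc hlep
          rwa [ht] at this
        · -- β < μ₀ + 1
          have hβμ : β < μ := by rw [hμ₀]; exact hc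
          have hlep : S.toPrebSys.lep (S.comp w' β) w := by
            refine ⟨by rw [hdcb, hwd]; exact le_of_lt hc, ?_⟩
            rw [hdcb, hwc]
            exact S.comp_mono w' β (μ₀ + 1) hδl' (le_of_lt hc) hμ1δ
          have h2 := ihμ β hβμ (S.depth w) (S.comp w' β) w hdcb rfl hbc hb hlep
          rw [ht] at h2
          rcases h2 with h | h
          · exact absurd h (by decide)
          · rw [h]; exact TV.ple_refl _
      cases hval : S.val (.K A φ) w with
      | u => exact TV.ple_u' _
      | t =>
        have ht : TV.t ∈ {x | ∃ α < S.depth w', x = S.val (.K A φ) (S.comp w' α)} := by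
          rw [← hval]; exact hmem
        rw [show TV.plubSet {x | ∃ α < S.depth w', x = S.val (.K A φ) (S.comp w' α)} = TV.t
          from by simp only [TV.plubSet, if_pos ht]]
        exact TV.ple_refl _
      | f =>
        have hf : TV.f ∈ {x | ∃ α < S.depth w', x = S.val (.K A φ) (S.comp w' α)} := by
          rw [← hval]; exact hmem
        have hnt : TV.t ∉ {x | ∃ α < S.depth w', x = S.val (.K A φ) (S.comp w' α)} := by
          rintro ⟨β, hβ, hteq⟩
          have := hval_at β hβ hteq.symm
          rw [hval] at this
          rcases this with h | h <;> exact absurd h (by decide)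
        rw [show TV.plubSet {x | ∃ α < S.depth w', x = S.val (.K A φ) (S.comp w' α)} = TV.f
          from by simp only [TV.plubSet, if_neg hnt, if_pos hf]]
        exact TV.ple_refl _
  · -- μ limit
    have hwl : Order.IsSuccLimit (S.depth w) := by rw [hw]; exact hμl
    have hcomp : ∀ α < S.depth w, S.comp w α = S.restrict w' α := by
      intro α hα
      have := S.restrict_limit w' (S.depth w) α hwl hle.1 hα
      rw [hle.2] at this
      exact this
    rw [S.val_K_limit A φ w hwl]
    have key : ∀ x ∈ {x | ∃ α < S.depth w, x = S.val (.K A φ) (S.comp w α)},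
        TV.ple x (S.val (.K A φ) w') := by
      rintro x ⟨α, hα, rfl⟩
      have hαμ : α < μ := by rw [← hw]; exact hα
      have hbα : S.Biworld (S.comp w α) := ((S.biworld_limit w hwl).mp hb) α hα
      have hdα : S.depth (S.comp w α) = α := S.depth_comp w α hwl hα
      have hlepα : S.toPrebSys.lep (S.comp w α) w' := by
        refine ⟨by rw [hdα]; exact le_of_lt (lt_of_lt_of_le hα hle.1), ?_⟩
        rw [hdα, hcomp α hα]
      exact ihμ α hαμ δ (S.comp w α) w' hdα hw' hbα hb' hlepα
    by_cases htm : TV.t ∈ {x | ∃ α < S.depth w, x = S.val (.K A φ) (S.comp w α)}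
    · rw [show TV.plubSet {x | ∃ α < S.depth w, x = S.val (.K A φ) (S.comp w α)} = TV.t
        from by simp only [TV.plubSet, if_pos htm]]
      exact key TV.t htm
    by_cases hfm : TV.f ∈ {x | ∃ α < S.depth w, x = S.val (.K A φ) (S.comp w α)}
    · rw [show TV.plubSet {x | ∃ α < S.depth w, x = S.val (.K A φ) (S.comp w α)} = TV.f
        from by simp only [TV.plubSet, if_neg htm, if_pos hfm]]
      exact key TV.f hfm
    · rw [show TV.plubSet {x | ∃ α < S.depth w, x = S.val (.K A φ) (S.comp w α)} = TV.u
        from by simp only [TV.plubSet, if_neg htm, if_neg hfm]]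
      exact TV.ple_u' _

end ValSys

namespace ValSys

variable {Agent Atom : Type} (S : ValSys Agent Atom)

theorem mmono (A : Agent) (φ : Form Agent Atom)
    (hφ : ∀ v v', S.Biworld v → S.Biworld v' → S.toPrebSys.lep v v' →
      TV.ple (S.val φ v) (S.val φ v')) :
    ∀ (μ δ : Ordinal.{0}) (w w' : S.W), S.depth w = μ → S.depth w' = δ →
      S.Biworld w → S.Biworld w' → S.toPrebSys.lep w w' →
      TV.ple (S.val (.M A φ) w) (S.val (.M A φ) w') := by
  intro μ
  induction μ using Ordinal.induction with
  | h μ ihμ =>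
  intro δ
  induction δ using Ordinal.induction with
  | h δ ihδ =>
  intro w w' hw hw' hb hb' hle
  by_cases heqd : S.depth w = S.depth w'
  · have hww : w = w' := by
      rw [← hle.2, heqd, S.toPrebSys.restrict_self _ w' rfl]
    rw [hww]; exact TV.ple_refl _
  have hlt : S.depth w < S.depth w' := lt_of_le_of_ne hle.1 heqd
  rcases ord_cases μ with h0 | ⟨μ₀, hμ₀⟩ | hμl
  · rw [S.val_M_zero A φ w (hw.trans h0)]
    exact TV.ple_u' _
  · have hwd : S.depth w = μ₀ + 1 := hw.trans hμ₀
    rcases ord_cases δ with h0' | ⟨ν₀, hν₀⟩ | hδl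
    · rw [hw', h0'] at hlt
      exact absurd hlt not_lt_zero
    · have hw'd : S.depth w' = ν₀ + 1 := hw'.trans hν₀
      have hsucc_le : μ₀ + 1 ≤ S.depth w' := by rw [← hwd]; exact hle.1
      have hμν : μ₀ ≤ ν₀ := ord_add_one_le_add_one (by rw [← hw'd]; exact hsucc_le)
      have hposs : S.imposs A w = (fun v => S.restrict v μ₀) '' S.imposs A w' := by
        conv_lhs => rw [← hle.2, hwd]
        exact S.restrict_succ_imposs w' ν₀ μ₀ A hw'd hsucc_le
      have memB : ∀ v ∈ S.imposs A w, S.Biworld v := by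
        intro v hv
        have h1 := ((S.biworld_succ w μ₀ hwd).mp hb A).1
        have h2 : v ∈ S.poss A w ∪ S.imposs A w := Or.inr hv
        rw [h1] at h2
        exact h2.2
      have memB' : ∀ v ∈ S.imposs A w', S.Biworld v ∧ S.depth v = ν₀ := by
        intro v hv
        have h1 := ((S.biworld_succ w' ν₀ hw'd).mp hb' A).1
        have h2 : v ∈ S.poss A w' ∪ S.imposs A w' := Or.inr hv
        rw [h1] at h2
        exact ⟨h2.2, h2.1⟩
      have key : ∀ v' ∈ S.imposs A w',
          TV.ple (S.val φ (S.restrict v' μ₀)).inv (S.val φ v').inv := by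
        intro v' hv'
        have hdv' : S.depth v' = ν₀ := (memB' v' hv').2
        have hμ₀v' : μ₀ ≤ S.depth v' := by rw [hdv']; exact hμν
        refine TV.ple_inv' (hφ _ _ ?_ (memB' v' hv').1 ?_)
        · apply memB
          rw [hposs]
          exact ⟨v', hv', rfl⟩
        · exact ⟨by rw [S.depth_restrict v' μ₀ hμ₀v']; exact hμ₀v',
            by rw [S.depth_restrict v' μ₀ hμ₀v']⟩
      rw [S.val_M_succ A φ w μ₀ hwd, S.val_M_succ A φ w' ν₀ hw'd]
      apply TV.tglb_mono
      · rintro x ⟨v, hv, rfl⟩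
        rw [hposs] at hv
        obtain ⟨v', hv', rfl⟩ := hv
        exact ⟨(S.val φ v').inv, ⟨v', hv', rfl⟩, key v' hv'⟩
      · rintro y ⟨v', hv', rfl⟩
        refine ⟨(S.val φ (S.restrict v' μ₀)).inv, ⟨S.restrict v' μ₀, ?_, rfl⟩, key v' hv'⟩
        rw [hposs]
        exact ⟨v', hv', rfl⟩
    · have hδl' : Order.IsSuccLimit (S.depth w') := by rw [hw']; exact hδl
      have hμ1δ : μ₀ + 1 < S.depth w' := by rw [← hwd]; exact hlt
      have hwc : w = S.comp w' (μ₀ + 1) := by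
        conv_lhs => rw [← hle.2, hwd]
        exact S.restrict_succ_limit w' μ₀ hδl' (le_of_lt hμ1δ)
      rw [S.val_M_limit A φ w' hδl']
      have hmem : S.val (.M A φ) w ∈
          {x | ∃ α < S.depth w', x = S.val (.M A φ) (S.comp w' α)} :=
        ⟨μ₀ + 1, hμ1δ, by rw [← hwc]⟩
      have hval_at : ∀ β < S.depth w', S.val (.M A φ) (S.comp w' β) = TV.t →
          TV.ple (S.val (.M A φ) w) TV.t := by
        intro β hβ ht
        have hdcb : S.depth (S.comp w' β) = β := S.depth_comp w' β hδl' hβ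
        have hbc : S.Biworld (S.comp w' β) := ((S.biworld_limit w' hδl').mp hb') β hβ
        rcases le_or_gt (μ₀ + 1) β with hc | hc
        · have hβδ : β < δ := by rw [← hw']; exact hβ
          have hlep : S.toPrebSys.lep w (S.comp w' β) := by
            refine ⟨by rw [hwd, hdcb]; exact hc, ?_⟩
            rw [hwd]
            have := S.comp_mono w' (μ₀ + 1) β hδl' hc hβ
            rw [this, ← hwc]
          have := ihδ β hβδ w (S.comp w' β) hw hdcb hb hbc hlep
          rwa [ht] at this
        · have hβμ : β < μ := by rw [hμ₀]; exact hc
          have hlep : S.toPrebSys.lep (S.comp w' β) w := by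
            refine ⟨by rw [hdcb, hwd]; exact le_of_lt hc, ?_⟩
            rw [hdcb, hwc]
            exact S.comp_mono w' β (μ₀ + 1) hδl' (le_of_lt hc) hμ1δ
          have h2 := ihμ β hβμ (S.depth w) (S.comp w' β) w hdcb rfl hbc hb hlep
          rw [ht] at h2
          rcases h2 with h | h
          · exact absurd h (by decide)
          · rw [h]; exact TV.ple_refl _
      cases hval : S.val (.M A φ) w with
      | u => exact TV.ple_u' _
      | t =>
        have ht : TV.t ∈ {x | ∃ α < S.depth w', x = S.val (.M A φ) (S.comp w' α)} := by
          rw [← hval]; exact hmem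
        rw [show TV.plubSet {x | ∃ α < S.depth w', x = S.val (.M A φ) (S.comp w' α)} = TV.t
          from by simp only [TV.plubSet, if_pos ht]]
        exact TV.ple_refl _
      | f =>
        have hf : TV.f ∈ {x | ∃ α < S.depth w', x = S.val (.M A φ) (S.comp w' α)} := by
          rw [← hval]; exact hmem
        have hnt : TV.t ∉ {x | ∃ α < S.depth w', x = S.val (.M A φ) (S.comp w' α)} := by
          rintro ⟨β, hβ, hteq⟩
          have := hval_at β hβ hteq.symm
          rw [hval] at this
          rcases this with h | h <;> exact absurd h (by decide)
        rw [show TV.plubSet {x | ∃ α < S.depth w', x = S.val (.M A φ) (S.comp w' α)} = TV.f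
          from by simp only [TV.plubSet, if_neg hnt, if_pos hf]]
        exact TV.ple_refl _
  · have hwl : Order.IsSuccLimit (S.depth w) := by rw [hw]; exact hμl
    have hcomp : ∀ α < S.depth w, S.comp w α = S.restrict w' α := by
      intro α hα
      have := S.restrict_limit w' (S.depth w) α hwl hle.1 hα
      rw [hle.2] at this
      exact this
    rw [S.val_M_limit A φ w hwl]
    have key : ∀ x ∈ {x | ∃ α < S.depth w, x = S.val (.M A φ) (S.comp w α)},
        TV.ple x (S.val (.M A φ) w') := by
      rintro x ⟨α, hα, rfl⟩
      have hαμ : α < μ := by rw [← hw]; exact hα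
      have hbα : S.Biworld (S.comp w α) := ((S.biworld_limit w hwl).mp hb) α hα
      have hdα : S.depth (S.comp w α) = α := S.depth_comp w α hwl hα
      have hlepα : S.toPrebSys.lep (S.comp w α) w' := by
        refine ⟨by rw [hdα]; exact le_of_lt (lt_of_lt_of_le hα hle.1), ?_⟩
        rw [hdα, hcomp α hα]
      exact ihμ α hαμ δ (S.comp w α) w' hdα hw' hbα hb' hlepα
    by_cases htm : TV.t ∈ {x | ∃ α < S.depth w, x = S.val (.M A φ) (S.comp w α)}
    · rw [show TV.plubSet {x | ∃ α < S.depth w, x = S.val (.M A φ) (S.comp w α)} = TV.t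
        from by simp only [TV.plubSet, if_pos htm]]
      exact key TV.t htm
    by_cases hfm : TV.f ∈ {x | ∃ α < S.depth w, x = S.val (.M A φ) (S.comp w α)}
    · rw [show TV.plubSet {x | ∃ α < S.depth w, x = S.val (.M A φ) (S.comp w α)} = TV.f
        from by simp only [TV.plubSet, if_neg htm, if_pos hfm]]
      exact key TV.f hfm
    · rw [show TV.plubSet {x | ∃ α < S.depth w, x = S.val (.M A φ) (S.comp w α)} = TV.u
        from by simp only [TV.plubSet, if_neg htm, if_neg hfm]]
      exact TV.ple_u' _

theorem emono (G : Set Agent) (φ : Form Agent Atom)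
    (hφ : ∀ v v', S.Biworld v → S.Biworld v' → S.toPrebSys.lep v v' →
      TV.ple (S.val φ v) (S.val φ v')) :
    ∀ w w', S.Biworld w → S.Biworld w' → S.toPrebSys.lep w w' →
      TV.ple (S.val (.E G φ) w) (S.val (.E G φ) w') := by
  intro w w' hb hb' hle
  rw [S.val_E G φ w, S.val_E G φ w']
  apply TV.tglb_mono
  · rintro x ⟨A, hA, rfl⟩
    exact ⟨_, ⟨A, hA, rfl⟩, S.kmono A φ hφ _ _ w w' rfl rfl hb hb' hle⟩
  · rintro y ⟨A, hA, rfl⟩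
    exact ⟨_, ⟨A, hA, rfl⟩, S.kmono A φ hφ _ _ w w' rfl rfl hb hb' hle⟩

theorem eitermono (G : Set Agent) (φ : Form Agent Atom)
    (hφ : ∀ v v', S.Biworld v → S.Biworld v' → S.toPrebSys.lep v v' →
      TV.ple (S.val φ v) (S.val φ v')) :
    ∀ (k : ℕ) (w w'), S.Biworld w → S.Biworld w' → S.toPrebSys.lep w w' →
      TV.ple (S.val (Form.Eiter G k φ) w) (S.val (Form.Eiter G k φ) w') := by
  intro k
  induction k with
  | zero => exact hφ
  | succ k ih =>
    intro w w' hb hb' hle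
    show TV.ple (S.val (.E G (Form.Eiter G k φ)) w) (S.val (.E G (Form.Eiter G k φ)) w')
    exact S.emono G (Form.Eiter G k φ) ih w w' hb hb' hle

end ValSys

/-- Precision monotonicity of the three-valued valuation. -/
theorem val_precision_mono {Agent Atom : Type} (S : ValSys Agent Atom) (w w' : S.W)
    (hb : S.Biworld w) (hb' : S.Biworld w') (hle : S.toPrebSys.lep w w')
    (φ : Form Agent Atom) :
    TV.ple (S.val φ w) (S.val φ w') := by
  induction φ generalizing w w' with
  | atom P =>
    rw [S.val_atom P w, S.val_atom P w']
    have hobj : S.obj w = S.obj w' := by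
      conv_lhs => rw [← hle.2]
      exact S.toPrebSys.obj_restrict w' (S.depth w) hle.1
    rw [hobj]
    exact TV.ple_refl _
  | neg ψ ih =>
    rw [S.val_neg ψ w, S.val_neg ψ w']
    exact TV.ple_inv' (ih w w' hb hb' hle)
  | and ψ χ ih1 ih2 =>
    rw [S.val_and ψ χ w, S.val_and ψ χ w']
    exact TV.ple_tmin' (ih1 w w' hb hb' hle) (ih2 w w' hb hb' hle)
  | K A ψ ih => exact S.kmono A ψ ih (S.depth w) (S.depth w') w w' rfl rfl hb hb' hle
  | M A ψ ih => exact S.mmono A ψ ih (S.depth w) (S.depth w') w w' rfl rfl hb hb' hle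
  | E G ψ ih => exact S.emono G ψ ih w w' hb hb' hle
  | C G ψ ih =>
    rw [S.val_C G ψ w, S.val_C G ψ w']
    apply TV.tglb_mono
    · rintro x ⟨k, hk, rfl⟩
      exact ⟨_, ⟨k, hk, rfl⟩, S.eitermono G ψ ih k w w' hb hb' hle⟩
    · rintro y ⟨k, hk, rfl⟩
      exact ⟨_, ⟨k, hk, rfl⟩, S.eitermono G ψ ih k w w' hb hb' hle⟩
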